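/- Let B be a unital complex *-algebra and h : B → ℂ a linear functional that is faithful in the sense that for b ∈ B, if h(b·c) = 0 for all c ∈ B then b = 0. Let ρ be an exponential one-parameter group on B satisfying the modular condition h(a·b) = h(ρ_i(b)·a) for all a, b ∈ B, and let π : B → B be a surjective linear map with h ∘ π = h. If π is multiplicative (π(ab) = π(a)π(b)), then π ∘ ρ_z = ρ_z ∘ π for all z ∈ ℂ; if π is anti-multiplicative (π(ab) = π(b)π(a)), then π ∘ ρ_z = ρ_{−z} ∘ π for all z ∈ ℂ. -/

import Mathlib

/-- A function `f : ℂ → ℂ` is of exponential type: it is entire and satisfies a bound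
`|f z| ≤ M * exp (r * |Im z|)`. -/
def ExpType (f : ℂ → ℂ) : Prop :=
  Differentiable ℂ f ∧
    ∃ M r : ℝ, 0 < M ∧ 0 < r ∧ ∀ z : ℂ, ‖f z‖ ≤ M * Real.exp (r * |z.im|)

/-- A function from `ℂ` into a complex vector space `V` is of finite exponential type if it is a
finite linear combination of functions of exponential type with coefficients in `V`. -/
def FinExpType {V : Type*} [AddCommGroup V] [Module ℂ V] (f : ℂ → V) : Prop :=
  ∃ (n : ℕ) (v : Fin n → V) (g : Fin n → ℂ → ℂ),
    (∀ j, ExpType (g j)) ∧ ∀ z : ℂ, f z = ∑ j, g j z • v j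

/-- A one-parameter group on a unital complex *-algebra `B`: a family of algebra automorphisms
`β z` with `β (y + z) = β y ∘ β z` and `star (β z b) = β (conj z) (star b)`. -/
def IsOneParamGroup {B : Type*} [Ring B] [Algebra ℂ B] [StarRing B] [StarModule ℂ B]
    (β : ℂ → (B ≃ₐ[ℂ] B)) : Prop :=
  (∀ y z : ℂ, ∀ b : B, β (y + z) b = β y (β z b)) ∧
    (∀ z : ℂ, ∀ b : B, star (β z b) = β (starRingEnd ℂ z) (star b))

/-- An exponential one-parameter group: a one-parameter group such that `z ↦ β z b` is of finite
exponential type for every `b`. -/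
def IsExpOneParamGroup {B : Type*} [Ring B] [Algebra ℂ B] [StarRing B] [StarModule ℂ B]
    (β : ℂ → (B ≃ₐ[ℂ] B)) : Prop :=
  IsOneParamGroup β ∧ ∀ b : B, FinExpType (fun z => β z b)

open Complex Finset Filter Topology

noncomputable def Complex.abs : AbsoluteValue ℂ ℝ where
  toFun := fun z => ‖z‖
  map_mul' := norm_mul
  nonneg' := norm_nonneg
  eq_zero' := fun _ => norm_eq_zero
  add_le' := norm_add_le

lemma Complex.norm_eq_abs (z : ℂ) : ‖z‖ = Complex.abs z := rfl

lemma Complex.abs_I : Complex.abs Complex.I = 1 := Complex.norm_I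

lemma Complex.abs_natCast (n : ℕ) : Complex.abs (n : ℂ) = n := Complex.norm_natCast n

lemma Complex.abs_apply (z : ℂ) : Complex.abs z = Real.sqrt (Complex.normSq z) := Complex.norm_def z

lemma Complex.abs_exp (z : ℂ) : Complex.abs (Complex.exp z) = Real.exp z.re := Complex.norm_exp z

lemma Complex.abs_im_le_abs (z : ℂ) : |z.im| ≤ Complex.abs z := Complex.abs_im_le_norm z

lemma Complex.sq_abs (z : ℂ) : Complex.abs z ^ 2 = Complex.normSq z := Complex.sq_norm z

/-- Divide out the zeros at `(n+1)I`, `n < N`. -/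
lemma exists_factor (f : ℂ → ℂ) (hf : Differentiable ℂ f)
    (hz : ∀ n : ℕ, f (((n : ℂ) + 1) * Complex.I) = 0) (N : ℕ) :
    ∃ g : ℂ → ℂ, Differentiable ℂ g ∧
      ∀ z, f z = g z * ∏ n ∈ Finset.range N, (z - ((n : ℂ) + 1) * Complex.I) := by
  induction N with
  | zero => exact ⟨f, hf, by simp⟩
  | succ N ih =>
    obtain ⟨g, hg, hfac⟩ := ih
    set a : ℂ := ((N : ℂ) + 1) * Complex.I with ha
    have hga : g a = 0 := by
      have h0 := hz N
      rw [hfac a] at h0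
      rcases mul_eq_zero.mp h0 with h | h
      · exact h
      · exfalso
        obtain ⟨n, hn, hzero⟩ := Finset.prod_eq_zero_iff.mp h
        have : ((N : ℂ) - n) * Complex.I = 0 := by push_cast at hzero ⊢; ring_nf at hzero ⊢
                                                   linear_combination hzero
        rcases mul_eq_zero.mp this with h' | h'
        · have : (N : ℂ) = (n : ℂ) := by linear_combination h'
          have : N = n := by exact_mod_cast this
          exact absurd this (by have := Finset.mem_range.mp hn; omega)
        · exact Complex.I_ne_zero h'
    refine ⟨dslope g a, ?_, ?_⟩
    · have := (Complex.differentiableOn_dslope (c := a) (s := Set.univ) univ_mem).mpr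
        hg.differentiableOn
      rwa [← differentiableOn_univ]
    · intro z
      have hds : (z - a) * dslope g a z = g z - g a := by
        simpa [smul_eq_mul] using sub_smul_dslope g a z
      rw [Finset.prod_range_succ, hfac z]
      rw [hga, sub_zero] at hds
      rw [← ha, ← hds]; ring

lemma ratio_tendsto (c : ℝ) :
    Tendsto (fun R : ℝ => (R + c) / (R - c)) atTop (𝓝 1) := by
  have h1 : Tendsto (fun R : ℝ => 1 + 2 * c * (R - c)⁻¹) atTop (𝓝 (1 + 2 * c * 0)) := by
    exact tendsto_const_nhds.add
      (((tendsto_atTop_add_const_right _ (-c) tendsto_id).inv_tendsto_atTop).const_mul _)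
  rw [mul_zero, add_zero] at h1
  refine h1.congr' ?_
  filter_upwards [eventually_gt_atTop c] with R hR
  have : R - c ≠ 0 := sub_ne_zero.mpr hR.ne'
  field_simp
  ring

lemma one_add_sum_le_prod (u : ℕ → ℝ) (hu : ∀ n, 0 ≤ u n) (N : ℕ) :
    1 + ∑ n ∈ Finset.range N, u n ≤ ∏ n ∈ Finset.range N, (1 + u n) := by
  induction N with
  | zero => simp
  | succ N ih =>
    rw [Finset.prod_range_succ, Finset.sum_range_succ]
    have h1 : 0 ≤ ∑ n ∈ Finset.range N, u n := Finset.sum_nonneg fun n _ => hu n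
    nlinarith [hu N]

lemma abs_smul_I (n : ℕ) : Complex.abs (((n : ℂ) + 1) * Complex.I) = (n : ℝ) + 1 := by
  rw [map_mul, Complex.abs_I, mul_one]
  have : ((n : ℂ) + 1) = ((n + 1 : ℕ) : ℂ) := by push_cast; ring
  rw [this, Complex.abs_natCast]; push_cast; ring

lemma quot_bound {f g : ℂ → ℂ} (hg : Differentiable ℂ g) {M r : ℝ} (hr : 0 ≤ r) (hM : 0 ≤ M)
    (hb : ∀ z, Complex.abs (f z) ≤ M * Real.exp (r * |z.im|)) (N : ℕ)
    (hfac : ∀ z, f z = g z * ∏ n ∈ Finset.range N, (z - ((n : ℂ) + 1) * Complex.I))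
    {z₀ : ℂ} (hy : 0 < z₀.im) :
    Complex.abs (g z₀ * Complex.exp (Complex.I * r * z₀) *
      ∏ n ∈ Finset.range N, (z₀ + ((n : ℂ) + 1) * Complex.I)) ≤ M := by
  set Q : ℂ → ℂ := fun z => g z * Complex.exp (Complex.I * r * z) *
      ∏ n ∈ Finset.range N, (z + ((n : ℂ) + 1) * Complex.I) with hQ
  set Pm : ℂ → ℝ := fun z => ∏ n ∈ Finset.range N, Complex.abs (z - ((n : ℂ) + 1) * Complex.I)
    with hPm
  set Pp : ℂ → ℝ := fun z => ∏ n ∈ Finset.range N, Complex.abs (z + ((n : ℂ) + 1) * Complex.I)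
    with hPp
  -- the key modulus identity
  have hident : ∀ z, Complex.abs (Q z) * Pm z
      = Complex.abs (f z) * Real.exp (-(r * z.im)) * Pp z := by
    intro z
    have h1 : Complex.abs (f z) = Complex.abs (g z) * Pm z := by
      rw [hfac z, map_mul, map_prod]
    have h2 : Complex.abs (Complex.exp (Complex.I * r * z)) = Real.exp (-(r * z.im)) := by
      rw [Complex.abs_exp]
      congr 1
      simp [Complex.mul_re, Complex.mul_im]
    rw [hQ]
    simp only [map_mul, map_prod]
    rw [h2, h1]
    simp only [hPp, hPm]
    ring
  -- bound on half-disks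
  have hbound : ∀ R : ℝ, (N : ℝ) + 2 ≤ R → Complex.abs z₀ + 1 ≤ R →
      Complex.abs (Q z₀) ≤ M * ((R + ((N : ℝ) + 1)) / (R - ((N : ℝ) + 1))) ^ N := by
    intro R hR1 hR2
    set ratio : ℝ := (R + ((N : ℝ) + 1)) / (R - ((N : ℝ) + 1)) with hratio
    have hRN : (0 : ℝ) < R - ((N : ℝ) + 1) := by
      have : (0:ℝ) ≤ (N:ℝ) := Nat.cast_nonneg N
      linarith
    have hratio1 : 1 ≤ ratio := by
      rw [hratio, le_div_iff₀ hRN]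
      have : (0:ℝ) ≤ (N:ℝ) := Nat.cast_nonneg N
      linarith
    set C : ℝ := M * ratio ^ N with hC
    have hMC : M ≤ C := by
      rw [hC]
      nlinarith [one_le_pow₀ hratio1 (n := N), pow_nonneg (le_trans zero_le_one hratio1) N]
    set U : Set ℂ := Metric.ball (0 : ℂ) R ∩ {z : ℂ | 0 < z.im} with hU
    have hUopen : IsOpen U := Metric.isOpen_ball.inter (isOpen_lt continuous_const
      Complex.continuous_im)
    have hUb : Bornology.IsBounded U := Metric.isBounded_ball.subset Set.inter_subset_left
    have hQdiff : Differentiable ℂ Q := by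
      apply Differentiable.mul
      · exact hg.mul (Complex.differentiable_exp.comp (by fun_prop))
      · apply Differentiable.fun_finset_prod
        intro n _
        exact differentiable_id.add_const _
    have hclos : closure U ⊆ Metric.closedBall 0 R ∩ {z : ℂ | 0 ≤ z.im} := by
      apply closure_minimal
      · exact Set.inter_subset_inter Metric.ball_subset_closedBall
          (fun z hz => (le_of_lt hz : (0:ℝ) ≤ z.im))
      · exact Metric.isClosed_closedBall.inter (isClosed_le continuous_const Complex.continuous_im)
    have hfront : ∀ z ∈ frontier U, ‖Q z‖ ≤ C := by
      intro z hzf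
      rw [hUopen.frontier_eq] at hzf
      obtain ⟨hzc, hznot⟩ := hzf
      obtain ⟨hz1, hz2⟩ := hclos hzc
      rw [Metric.mem_closedBall, dist_zero_right, Complex.norm_eq_abs] at hz1
      rw [Set.mem_setOf_eq] at hz2
      rw [Complex.norm_eq_abs]
      -- in both cases we show: abs f z * exp(-(r z.im)) * Pp z ≤ C * Pm z, with 0 < Pm z
      have key : Complex.abs (f z) * Real.exp (-(r * z.im)) * Pp z ≤ C * Pm z ∧ 0 < Pm z := by
        by_cases him : z.im = 0
        · have hPmPp : Pm z = Pp z := by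
            rw [hPm, hPp]
            apply Finset.prod_congr rfl
            intro n _
            rw [Complex.abs_apply, Complex.abs_apply]
            congr 1
            simp [Complex.normSq_apply, Complex.mul_re, Complex.mul_im, him]
            ring
          have hPmpos : 0 < Pm z := by
            apply Finset.prod_pos
            intro n _
            have h3 : |(z - ((n : ℂ) + 1) * Complex.I).im| ≤
                Complex.abs (z - ((n : ℂ) + 1) * Complex.I) := Complex.abs_im_le_abs _
            have h4 : (z - ((n : ℂ) + 1) * Complex.I).im = -((n:ℝ) + 1) := by
              simp [Complex.mul_im, him]
            rw [h4] at h3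
            have : (0:ℝ) < (n:ℝ) + 1 := by positivity
            calc (0:ℝ) < (n:ℝ)+1 := this
            _ = |(-((n:ℝ)+1))| := by rw [abs_neg, abs_of_pos this]
            _ ≤ _ := h3
          constructor
          · rw [him, mul_zero, neg_zero, Real.exp_zero, mul_one, ← hPmPp]
            have : Complex.abs (f z) ≤ M := by
              have := hb z
              rwa [him, abs_zero, mul_zero, Real.exp_zero, mul_one] at this
            nlinarith [hPmpos.le]
          · exact hPmpos
        · -- then |z| = R
          have him' : 0 < z.im := lt_of_le_of_ne hz2 (Ne.symm him)
          have habsR : Complex.abs z = R := by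
            apply le_antisymm hz1
            by_contra hlt
            push_neg at hlt
            exact hznot ⟨by rwa [Metric.mem_ball, dist_zero_right, Complex.norm_eq_abs], him'⟩
          have hfactm : ∀ n ∈ Finset.range N,
              R - ((N:ℝ)+1) ≤ Complex.abs (z - ((n : ℂ) + 1) * Complex.I) := by
            intro n hn
            have hnN : n < N := Finset.mem_range.mp hn
            have h5 : Complex.abs z - Complex.abs (((n : ℂ) + 1) * Complex.I) ≤
                Complex.abs (z - ((n : ℂ) + 1) * Complex.I) := by
              simpa [Complex.norm_eq_abs] using
                norm_sub_norm_le z (((n : ℂ) + 1) * Complex.I)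
            rw [habsR, abs_smul_I] at h5
            have : (n:ℝ) + 1 ≤ (N:ℝ) + 1 := by
              have : (n:ℝ) ≤ (N:ℝ) := by exact_mod_cast hnN.le
              linarith
            linarith
          have hPmpos : 0 < Pm z := by
            apply Finset.prod_pos
            intro n hn
            exact lt_of_lt_of_le hRN (hfactm n hn)
          have hfactp : ∀ n ∈ Finset.range N,
              Complex.abs (z + ((n : ℂ) + 1) * Complex.I) ≤
                ratio * Complex.abs (z - ((n : ℂ) + 1) * Complex.I) := by
            intro n hn
            have hnN : n < N := Finset.mem_range.mp hn
            have h6 : Complex.abs (z + ((n : ℂ) + 1) * Complex.I) ≤ R + ((N:ℝ)+1) := by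
              have := Complex.abs.add_le z (((n : ℂ) + 1) * Complex.I)
              rw [abs_smul_I, habsR] at this
              have h7 : (n:ℝ) ≤ (N:ℝ) := by exact_mod_cast hnN.le
              linarith
            calc Complex.abs (z + ((n : ℂ) + 1) * Complex.I) ≤ R + ((N:ℝ)+1) := h6
            _ = ratio * (R - ((N:ℝ)+1)) := by rw [hratio, div_mul_cancel₀ _ hRN.ne']
            _ ≤ ratio * Complex.abs (z - ((n : ℂ) + 1) * Complex.I) := by
                apply mul_le_mul_of_nonneg_left (hfactm n hn)
                linarith
          constructor
          · have hPpb : Pp z ≤ ratio ^ N * Pm z := by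
              simp only [hPp, hPm]
              calc ∏ n ∈ Finset.range N, Complex.abs (z + ((n : ℂ) + 1) * Complex.I)
                  ≤ ∏ n ∈ Finset.range N, (ratio * Complex.abs (z - ((n : ℂ) + 1) * Complex.I)) :=
                    Finset.prod_le_prod (fun n _ => AbsoluteValue.nonneg _ _) hfactp
              _ = ratio ^ N * ∏ n ∈ Finset.range N,
                    Complex.abs (z - ((n : ℂ) + 1) * Complex.I) := by
                  rw [Finset.prod_mul_distrib, Finset.prod_const, Finset.card_range]
            have hfb : Complex.abs (f z) * Real.exp (-(r * z.im)) ≤ M := by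
              have h8 := hb z
              rw [abs_of_pos him'] at h8
              have h9 : Real.exp (r * z.im) * Real.exp (-(r * z.im)) = 1 := by
                rw [← Real.exp_add]; simp
              have h10 : 0 < Real.exp (-(r * z.im)) := Real.exp_pos _
              nlinarith [AbsoluteValue.nonneg Complex.abs (f z)]
            calc Complex.abs (f z) * Real.exp (-(r * z.im)) * Pp z
                ≤ M * (ratio ^ N * Pm z) := by
                  apply mul_le_mul hfb hPpb
                  · rw [hPp]; exact Finset.prod_nonneg fun n _ => AbsoluteValue.nonneg _ _
                  · exact hM
            _ = C * Pm z := by rw [hC]; ring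
          · exact hPmpos
      obtain ⟨hkey, hPmpos⟩ := key
      have := hident z
      nlinarith [this]
    have hz₀U : z₀ ∈ closure U := subset_closure ⟨by
        rw [Metric.mem_ball, dist_zero_right, Complex.norm_eq_abs]; linarith, hy⟩
    have := Complex.norm_le_of_forall_mem_frontier_norm_le hUb hQdiff.diffContOnCl hfront hz₀U
    rwa [Complex.norm_eq_abs] at this
  -- let R → ∞
  have htend : Tendsto (fun R : ℝ => M * ((R + ((N : ℝ) + 1)) / (R - ((N : ℝ) + 1))) ^ N)
      atTop (𝓝 (M * 1 ^ N)) :=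
    ((ratio_tendsto ((N : ℝ) + 1)).pow N).const_mul M
  rw [one_pow, mul_one] at htend
  have hshow : Complex.abs (g z₀ * Complex.exp (Complex.I * r * z₀) *
      ∏ n ∈ Finset.range N, (z₀ + ((n : ℂ) + 1) * Complex.I)) = Complex.abs (Q z₀) := rfl
  rw [hshow]
  refine ge_of_tendsto htend ?_
  filter_upwards [eventually_ge_atTop ((N : ℝ) + 2), eventually_ge_atTop (Complex.abs z₀ + 1)]
    with R h1 h2
  exact hbound R h1 h2

set_option maxHeartbeats 2000000 in
lemma key_vanish {f : ℂ → ℂ} (hf : Differentiable ℂ f) {M r : ℝ} (hr : 0 ≤ r)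
    (hb : ∀ z, Complex.abs (f z) ≤ M * Real.exp (r * |z.im|))
    (hz : ∀ n : ℕ, f (((n : ℂ) + 1) * Complex.I) = 0) :
    ∀ z, f z = 0 := by
  have hM : 0 ≤ M := by
    have := hb 0
    simp at this
    exact le_trans (AbsoluteValue.nonneg _ _) this
  -- vanishing on the upper half-plane
  have main : ∀ z₀ : ℂ, 0 < z₀.im → f z₀ = 0 := by
    intro z₀ hy
    set y : ℝ := z₀.im with hy'
    -- the fundamental estimate for each N
    have hest : ∀ N : ℕ, Complex.abs (f z₀) ≤ M * Real.exp (r * y) *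
        ∏ n ∈ Finset.range N, (Complex.abs (z₀ - ((n : ℂ) + 1) * Complex.I) /
          Complex.abs (z₀ + ((n : ℂ) + 1) * Complex.I)) := by
      intro N
      obtain ⟨g, hg, hfac⟩ := exists_factor f hf hz N
      have hQ := quot_bound hg hr hM hb N hfac hy
      have hPppos : ∀ n ∈ Finset.range N,
          (0:ℝ) < Complex.abs (z₀ + ((n : ℂ) + 1) * Complex.I) := by
        intro n _
        have him : (z₀ + ((n : ℂ) + 1) * Complex.I).im = y + ((n:ℝ) + 1) := by
          simp [Complex.mul_im, hy']
        have h3 := Complex.abs_im_le_abs (z₀ + ((n : ℂ) + 1) * Complex.I)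
        rw [him] at h3
        have : (0:ℝ) < y + ((n:ℝ)+1) := by positivity
        calc (0:ℝ) < y + ((n:ℝ)+1) := this
        _ = |y + ((n:ℝ)+1)| := (abs_of_pos this).symm
        _ ≤ _ := h3
      have hPmnn : ∀ n ∈ Finset.range N,
          (0:ℝ) ≤ Complex.abs (z₀ - ((n : ℂ) + 1) * Complex.I) :=
        fun n _ => AbsoluteValue.nonneg _ _
      -- |f z₀| = |g z₀| * Pm, |Q| = |g z₀| e^{-ry} Pp ≤ M
      have h1 : Complex.abs (f z₀) = Complex.abs (g z₀) *
          ∏ n ∈ Finset.range N, Complex.abs (z₀ - ((n : ℂ) + 1) * Complex.I) := by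
        rw [hfac z₀, map_mul, map_prod]
      have h2 : Complex.abs (g z₀) * Real.exp (-(r * y)) *
          ∏ n ∈ Finset.range N, Complex.abs (z₀ + ((n : ℂ) + 1) * Complex.I) ≤ M := by
        have habs : Complex.abs (g z₀ * Complex.exp (Complex.I * r * z₀) *
            ∏ n ∈ Finset.range N, (z₀ + ((n : ℂ) + 1) * Complex.I))
            = Complex.abs (g z₀) * Real.exp (-(r * y)) *
              ∏ n ∈ Finset.range N, Complex.abs (z₀ + ((n : ℂ) + 1) * Complex.I) := by
          rw [map_mul, map_mul, map_prod, Complex.abs_exp]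
          congr 2
          congr 1
          simp [Complex.mul_re, Complex.mul_im, hy']
        rw [← habs]; exact hQ
      rw [h1, Finset.prod_div_distrib]
      have hPp : (0:ℝ) < ∏ n ∈ Finset.range N,
          Complex.abs (z₀ + ((n : ℂ) + 1) * Complex.I) := Finset.prod_pos hPppos
      have hexp : Real.exp (r * y) * Real.exp (-(r * y)) = 1 := by
        rw [← Real.exp_add]; simp
      have hgle : Complex.abs (g z₀) ≤ M * Real.exp (r * y) / ∏ n ∈ Finset.range N,
          Complex.abs (z₀ + ((n : ℂ) + 1) * Complex.I) := by
        rw [le_div_iff₀ hPp]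
        calc Complex.abs (g z₀) * ∏ n ∈ Finset.range N,
              Complex.abs (z₀ + ((n : ℂ) + 1) * Complex.I)
            = Real.exp (r * y) * (Complex.abs (g z₀) * Real.exp (-(r * y)) *
              ∏ n ∈ Finset.range N, Complex.abs (z₀ + ((n : ℂ) + 1) * Complex.I)) := by
              rw [← mul_assoc, ← mul_assoc]
              rw [show Real.exp (r*y) * Complex.abs (g z₀) * Real.exp (-(r*y))
                = Complex.abs (g z₀) * (Real.exp (r*y) * Real.exp (-(r*y))) by ring, hexp,
                mul_one]
        _ ≤ Real.exp (r * y) * M := by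
              exact mul_le_mul_of_nonneg_left h2 (Real.exp_pos _).le
        _ = M * Real.exp (r * y) := by ring
      calc Complex.abs (g z₀) * ∏ n ∈ Finset.range N,
            Complex.abs (z₀ - ((n : ℂ) + 1) * Complex.I)
          ≤ (M * Real.exp (r * y) / ∏ n ∈ Finset.range N,
              Complex.abs (z₀ + ((n : ℂ) + 1) * Complex.I)) *
            ∏ n ∈ Finset.range N, Complex.abs (z₀ - ((n : ℂ) + 1) * Complex.I) := by
            exact mul_le_mul_of_nonneg_right hgle (Finset.prod_nonneg hPmnn)
      _ = M * Real.exp (r * y) * ((∏ n ∈ Finset.range N,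
            Complex.abs (z₀ - ((n : ℂ) + 1) * Complex.I)) / ∏ n ∈ Finset.range N,
            Complex.abs (z₀ + ((n : ℂ) + 1) * Complex.I)) := by
          rw [div_mul_eq_mul_div, mul_div_assoc]
    -- the product tends to zero
    set K : ℝ := (Complex.abs z₀ + 1)^2 + y with hKdef
    have hKpos : 0 < K := by positivity
    have hyK : y ≤ K := by nlinarith [AbsoluteValue.nonneg Complex.abs z₀]
    set u : ℕ → ℝ := fun n => y / (K * ((n:ℝ) + 1)) with hu
    have hupos : ∀ n, 0 < u n := by
      intro n
      apply div_pos hy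
      positivity
    have hratiofact : ∀ n : ℕ, Complex.abs (z₀ - ((n : ℂ) + 1) * Complex.I) /
        Complex.abs (z₀ + ((n : ℂ) + 1) * Complex.I) ≤ (1 + u n)⁻¹ := by
      intro n
      set c : ℝ := (n:ℝ) + 1 with hc
      have hcpos : (0:ℝ) < c := by positivity
      set a : ℝ := Complex.abs (z₀ + ((n : ℂ) + 1) * Complex.I) with ha
      set b : ℝ := Complex.abs (z₀ - ((n : ℂ) + 1) * Complex.I) with hbb
      have ha2 : a^2 = z₀.re^2 + (y + c)^2 := by
        rw [ha, Complex.sq_abs, Complex.normSq_apply]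
        simp [Complex.mul_re, Complex.mul_im, hc]
        ring
      have hb2 : b^2 = z₀.re^2 + (y - c)^2 := by
        rw [hbb, Complex.sq_abs, Complex.normSq_apply]
        simp [Complex.mul_re, Complex.mul_im, hc]
        ring
      have hbnn : 0 ≤ b := AbsoluteValue.nonneg _ _
      have hapos : 0 < a := by
        have him : (z₀ + ((n : ℂ) + 1) * Complex.I).im = y + c := by
          simp [Complex.mul_im, hc, hy']
        have h3 := Complex.abs_im_le_abs (z₀ + ((n : ℂ) + 1) * Complex.I)
        rw [him] at h3
        have hyc : (0:ℝ) < y + c := by positivity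
        calc (0:ℝ) < y + c := hyc
        _ = |y + c| := (abs_of_pos hyc).symm
        _ ≤ a := h3
      have hblec : b ≤ (Complex.abs z₀ + 1) * c := by
        have htri : b ≤ Complex.abs z₀ + Complex.abs (((n : ℂ) + 1) * Complex.I) := by
          rw [hbb]
          simpa [Complex.norm_eq_abs] using norm_sub_le z₀ (((n : ℂ) + 1) * Complex.I)
        rw [abs_smul_I] at htri
        have h1c : (1:ℝ) ≤ c := by rw [hc]; have : (0:ℝ) ≤ (n:ℝ) := Nat.cast_nonneg n; linarith
        have : Complex.abs z₀ + c ≤ (Complex.abs z₀ + 1) * c := by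
          nlinarith [AbsoluteValue.nonneg Complex.abs z₀]
        rw [hc] at this ⊢
        linarith
      have hule : u n ≤ 1 := by
        rw [hu]
        rw [div_le_one (by positivity)]
        have h1c : (1:ℝ) ≤ (n:ℝ) + 1 := by have : (0:ℝ) ≤ (n:ℝ) := Nat.cast_nonneg n; linarith
        nlinarith
      have huc : u n * (K * c) = y := by
        rw [hu, hc]
        field_simp
      have hsq : ((1 + u n) * b)^2 ≤ a^2 := by
        have hb2K : b^2 ≤ K * c^2 := by
          have : ((Complex.abs z₀ + 1) * c)^2 ≤ K * c^2 := by
            rw [hKdef]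
            nlinarith
          nlinarith
        have hun := hupos n
        have h4yc : a^2 - b^2 = 4 * y * c := by rw [ha2, hb2]; ring
        have h3u : (1 + u n)^2 ≤ 1 + 3 * u n := by nlinarith
        have hun3 : 3 * u n * b^2 ≤ 3 * y * c := by
          have := mul_le_mul_of_nonneg_left hb2K (by linarith : (0:ℝ) ≤ 3 * u n)
          calc 3 * u n * b^2 ≤ 3 * u n * (K * c^2) := this
          _ = 3 * (u n * (K * c)) * c := by ring
          _ = 3 * y * c := by rw [huc]
        nlinarith [sq_nonneg b, hupos n]
      have hab : (1 + u n) * b ≤ a := by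
        have h1 : 0 ≤ (1 + u n) * b := by positivity
        exact (pow_le_pow_iff_left₀ h1 hapos.le two_ne_zero).mp hsq
      rw [inv_eq_one_div, div_le_div_iff₀ hapos (by positivity)]
      linarith
    -- combine
    have hprodle : ∀ N : ℕ, Complex.abs (f z₀) ≤ M * Real.exp (r * y) *
        (1 + ∑ n ∈ Finset.range N, u n)⁻¹ := by
      intro N
      refine le_trans (hest N) ?_
      apply mul_le_mul_of_nonneg_left _ (by positivity)
      calc (∏ n ∈ Finset.range N, (Complex.abs (z₀ - ((n : ℂ) + 1) * Complex.I) /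
            Complex.abs (z₀ + ((n : ℂ) + 1) * Complex.I)))
          ≤ ∏ n ∈ Finset.range N, (1 + u n)⁻¹ := by
            apply Finset.prod_le_prod
            · intro n _
              positivity
            · intro n _
              exact hratiofact n
      _ = (∏ n ∈ Finset.range N, (1 + u n))⁻¹ := by rw [← Finset.prod_inv_distrib]
      _ ≤ (1 + ∑ n ∈ Finset.range N, u n)⁻¹ := by
            apply inv_anti₀
            · have : 0 ≤ ∑ n ∈ Finset.range N, u n :=
                Finset.sum_nonneg fun n _ => (hupos n).le
              linarith
            · exact one_add_sum_le_prod u (fun n => (hupos n).le) N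
    have hsum : ∀ N : ℕ, ∑ n ∈ Finset.range N, u n
        = (y / K) * ∑ n ∈ Finset.range N, (1 / ((n:ℝ) + 1)) := by
      intro N
      rw [Finset.mul_sum]
      apply Finset.sum_congr rfl
      intro n _
      rw [hu]
      field_simp
    have htend : Tendsto (fun N : ℕ => M * Real.exp (r * y) *
        (1 + ∑ n ∈ Finset.range N, u n)⁻¹) atTop (𝓝 (M * Real.exp (r * y) * 0)) := by
      apply Tendsto.const_mul
      apply Filter.Tendsto.inv_tendsto_atTop
      apply tendsto_atTop_add_const_left
      have hH := Real.tendsto_sum_range_one_div_nat_succ_atTop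
      have := hH.const_mul_atTop (show (0:ℝ) < y / K from div_pos hy hKpos)
      refine this.congr ?_
      intro N
      rw [hsum N]
    rw [mul_zero] at htend
    have hfle : Complex.abs (f z₀) ≤ 0 :=
      ge_of_tendsto htend (Filter.Eventually.of_forall hprodle)
    have := le_antisymm hfle (AbsoluteValue.nonneg _ _)
    exact (AbsoluteValue.eq_zero _).mp this
  -- identity theorem
  intro z
  have hanal : AnalyticOnNhd ℂ f Set.univ := by
    rw [← analyticOnNhd_univ_iff_differentiable] at hf
    exact hf
  have hev : f =ᶠ[nhds Complex.I] 0 := by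
    apply Filter.eventuallyEq_of_mem ((isOpen_lt continuous_const Complex.continuous_im).mem_nhds
      (by simp : (Complex.I).im > 0))
    intro w hw
    exact main w hw
  exact hanal.eqOn_zero_of_preconnected_of_eventuallyEq_zero isPreconnected_univ
    (Set.mem_univ Complex.I) hev (Set.mem_univ z)

lemma finexp_bound {n : ℕ} (g : Fin n → ℂ → ℂ) (hg : ∀ j, ExpType (g j)) (α : Fin n → ℂ) :
    ∃ M r : ℝ, 0 ≤ M ∧ 0 ≤ r ∧
      ∀ z, Complex.abs (∑ j, g j z * α j) ≤ M * Real.exp (r * |z.im|) := by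
  choose M r hM hr hb using fun j => (hg j).2
  refine ⟨∑ j, M j * Complex.abs (α j), ∑ j, r j, ?_, ?_, ?_⟩
  · exact Finset.sum_nonneg fun j _ => mul_nonneg (hM j).le (AbsoluteValue.nonneg _ _)
  · exact Finset.sum_nonneg fun j _ => (hr j).le
  · intro z
    calc Complex.abs (∑ j, g j z * α j) ≤ ∑ j, Complex.abs (g j z * α j) := by
          simpa [Complex.norm_eq_abs] using norm_sum_le Finset.univ (fun j => g j z * α j)
    _ = ∑ j, Complex.abs (g j z) * Complex.abs (α j) := by
          simp [map_mul]
    _ ≤ ∑ j, (M j * Complex.abs (α j)) * Real.exp ((∑ j, r j) * |z.im|) := by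
          apply Finset.sum_le_sum
          intro j _
          have h1 : Complex.abs (g j z) ≤ M j * Real.exp (r j * |z.im|) := hb j z
          have h2 : Real.exp (r j * |z.im|) ≤ Real.exp ((∑ j, r j) * |z.im|) := by
            apply Real.exp_le_exp.mpr
            apply mul_le_mul_of_nonneg_right _ (abs_nonneg _)
            exact Finset.single_le_sum (fun j _ => (hr j).le) (Finset.mem_univ j)
          calc Complex.abs (g j z) * Complex.abs (α j)
              ≤ (M j * Real.exp (r j * |z.im|)) * Complex.abs (α j) :=
                mul_le_mul_of_nonneg_right h1 (AbsoluteValue.nonneg _ _)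
          _ ≤ (M j * Real.exp ((∑ j, r j) * |z.im|)) * Complex.abs (α j) := by
                apply mul_le_mul_of_nonneg_right _ (AbsoluteValue.nonneg _ _)
                exact mul_le_mul_of_nonneg_left h2 (hM j).le
          _ = (M j * Complex.abs (α j)) * Real.exp ((∑ j, r j) * |z.im|) := by ring
    _ = (∑ j, M j * Complex.abs (α j)) * Real.exp ((∑ j, r j) * |z.im|) := by
          rw [← Finset.sum_mul]

/-- Two finite-exponential-type functions whose images under a linear functional agree on
`{(n+1)·i : n ∈ ℕ}` agree everywhere after applying the functional. -/
lemma finexp_scalar_eq {V : Type*} [AddCommGroup V] [Module ℂ V]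
    {F G : ℂ → V} (hF : FinExpType F) (hG : FinExpType G) (φ : V →ₗ[ℂ] ℂ)
    (hzero : ∀ n : ℕ, φ (F (((n : ℂ) + 1) * Complex.I)) = φ (G (((n : ℂ) + 1) * Complex.I)))
    (z : ℂ) : φ (F z) = φ (G z) := by
  obtain ⟨nF, vF, gF, hgF, hFrep⟩ := hF
  obtain ⟨nG, vG, gG, hgG, hGrep⟩ := hG
  set f : ℂ → ℂ := fun z => (∑ j, gF j z * φ (vF j)) - (∑ j, gG j z * φ (vG j)) with hfdef
  have hrepr : ∀ z, f z = φ (F z) - φ (G z) := by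
    intro z
    rw [hfdef, hFrep, hGrep]
    simp only [map_sum, map_smul, smul_eq_mul]
  have hdiff : Differentiable ℂ f := by
    apply Differentiable.sub
    · exact Differentiable.fun_sum (fun j _ => ((hgF j).1.mul (differentiable_const _)))
    · exact Differentiable.fun_sum (fun j _ => ((hgG j).1.mul (differentiable_const _)))
  obtain ⟨M1, r1, hM1, hr1, hb1⟩ := finexp_bound gF hgF (fun j => φ (vF j))
  obtain ⟨M2, r2, hM2, hr2, hb2⟩ := finexp_bound gG hgG (fun j => φ (vG j))
  have hbf : ∀ w, Complex.abs (f w) ≤ (M1 + M2) * Real.exp ((r1 + r2) * |w.im|) := by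
    intro w
    have hle : Complex.abs (f w) ≤ Complex.abs (∑ j, gF j w * φ (vF j)) +
        Complex.abs (∑ j, gG j w * φ (vG j)) := by
      rw [hfdef]
      simpa [Complex.norm_eq_abs] using
        norm_sub_le (∑ j, gF j w * φ (vF j)) (∑ j, gG j w * φ (vG j))
    have he1 : Real.exp (r1 * |w.im|) ≤ Real.exp ((r1 + r2) * |w.im|) := by
      apply Real.exp_le_exp.mpr
      apply mul_le_mul_of_nonneg_right _ (abs_nonneg _)
      linarith
    have he2 : Real.exp (r2 * |w.im|) ≤ Real.exp ((r1 + r2) * |w.im|) := by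
      apply Real.exp_le_exp.mpr
      apply mul_le_mul_of_nonneg_right _ (abs_nonneg _)
      linarith
    have hB1 := le_trans (hb1 w) (mul_le_mul_of_nonneg_left he1 hM1)
    have hB2 := le_trans (hb2 w) (mul_le_mul_of_nonneg_left he2 hM2)
    calc Complex.abs (f w) ≤ _ + _ := hle
    _ ≤ M1 * Real.exp ((r1 + r2) * |w.im|) + M2 * Real.exp ((r1 + r2) * |w.im|) :=
        add_le_add hB1 hB2
    _ = (M1 + M2) * Real.exp ((r1 + r2) * |w.im|) := by ring
  have hzf : ∀ n : ℕ, f (((n : ℂ) + 1) * Complex.I) = 0 := by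
    intro n
    rw [hrepr, hzero n, sub_self]
  have := key_vanish hdiff (by linarith : (0:ℝ) ≤ r1 + r2) hbf hzf z
  rw [hrepr] at this
  exact sub_eq_zero.mp this

/-- Lemma 7.1 of the paper: let `h` be a faithful linear functional on a unital complex
*-algebra `B`, let `ρ` be an exponential one-parameter group satisfying the modular condition
`h (a * b) = h (ρ_i b * a)`, and let `π` be a surjective linear map preserving `h`. If `π` is
multiplicative then it commutes with every `ρ_z`; if `π` is anti-multiplicative then
`π ∘ ρ_z = ρ_{-z} ∘ π` for every `z`. -/
theorem modular_group_commutes_with_h_preserving_maps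
    {B : Type*} [Ring B] [Algebra ℂ B] [StarRing B] [StarModule ℂ B]
    (h : B →ₗ[ℂ] ℂ)
    (hfaith : ∀ b : B, (∀ c : B, h (b * c) = 0) → b = 0)
    (ρ : ℂ → (B ≃ₐ[ℂ] B)) (hρ : IsExpOneParamGroup ρ)
    (hmod : ∀ a b : B, h (a * b) = h (ρ Complex.I b * a))
    (π : B →ₗ[ℂ] B) (hsurj : Function.Surjective π)
    (hπh : ∀ b : B, h (π b) = h b) :
    ((∀ a b : B, π (a * b) = π a * π b) →
        ∀ z : ℂ, ∀ b : B, π (ρ z b) = ρ z (π b)) ∧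
    ((∀ a b : B, π (a * b) = π b * π a) →
        ∀ z : ℂ, ∀ b : B, π (ρ z b) = ρ (-z) (π b)) := by
  obtain ⟨⟨hgrp, _hstar⟩, hexp⟩ := hρ
  have hρ0 : ∀ b : B, ρ 0 b = b := by
    intro b
    have h2 : ρ 0 b = ρ 0 (ρ 0 b) := by
      have := hgrp 0 0 b
      simpa using this
    exact ((ρ 0).injective h2).symm
  -- the functional `x ↦ h (x * c)`
  have hφ : ∀ c : B, ∃ φ : B →ₗ[ℂ] ℂ, ∀ x : B, φ x = h (x * c) := by
    intro c
    exact ⟨h.comp (LinearMap.mulRight ℂ c), fun x => rfl⟩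
  constructor
  · -- multiplicative case
    intro hmul
    have base : ∀ b : B, π (ρ Complex.I b) = ρ Complex.I (π b) := by
      intro b
      have key : ∀ c : B, h ((π (ρ Complex.I b) - ρ Complex.I (π b)) * c) = 0 := by
        intro c
        obtain ⟨a, rfl⟩ := hsurj c
        have e1 : h (π (ρ Complex.I b) * π a) = h (ρ Complex.I (π b) * π a) :=
          calc h (π (ρ Complex.I b) * π a) = h (π (ρ Complex.I b * a)) := by rw [hmul]
          _ = h (ρ Complex.I b * a) := hπh _
          _ = h (a * b) := (hmod a b).symm
          _ = h (π (a * b)) := (hπh _).symm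
          _ = h (π a * π b) := by rw [hmul]
          _ = h (ρ Complex.I (π b) * π a) := hmod _ _
        rw [sub_mul, map_sub, e1, sub_self]
      exact sub_eq_zero.mp (hfaith _ key)
    have nat : ∀ (n : ℕ) (b : B), π (ρ ((n : ℂ) * Complex.I) b)
        = ρ ((n : ℂ) * Complex.I) (π b) := by
      intro n
      induction n with
      | zero => intro b; simp [hρ0]
      | succ n ih =>
        intro b
        have hcast : ((n + 1 : ℕ) : ℂ) * Complex.I = Complex.I + (n : ℂ) * Complex.I := by
          push_cast; ring
        rw [hcast, hgrp Complex.I ((n : ℂ) * Complex.I) b, base, ih,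
          hgrp Complex.I ((n : ℂ) * Complex.I) (π b)]
    intro z b
    have key : ∀ c : B, h (π (ρ z b) * c) = h (ρ z (π b) * c) := by
      intro c
      obtain ⟨φ, hφc⟩ := hφ c
      have hF : FinExpType (fun w => π (ρ w b)) := by
        obtain ⟨n, v, g, hg, hrep⟩ := hexp b
        refine ⟨n, fun j => π (v j), g, hg, fun w => ?_⟩
        have h5 : ρ w b = ∑ j, g j w • v j := hrep w
        show π (ρ w b) = _
        rw [h5]
        simp [map_sum, map_smul]
      have hG : FinExpType (fun w => ρ w (π b)) := hexp (π b)
      have hzero : ∀ n : ℕ, φ (π (ρ (((n : ℂ) + 1) * Complex.I) b))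
          = φ (ρ (((n : ℂ) + 1) * Complex.I) (π b)) := by
        intro n
        have hcast : ((n : ℂ) + 1) * Complex.I = ((n + 1 : ℕ) : ℂ) * Complex.I := by push_cast; ring
        rw [hcast, nat (n + 1) b]
      have := finexp_scalar_eq hF hG φ hzero z
      rwa [hφc, hφc] at this
    have key' : ∀ c : B, h ((π (ρ z b) - ρ z (π b)) * c) = 0 := by
      intro c
      rw [sub_mul, map_sub, key c, sub_self]
    exact sub_eq_zero.mp (hfaith _ key')
  · -- anti-multiplicative case
    intro hanti
    have base : ∀ b : B, π (ρ (-Complex.I) b) = ρ Complex.I (π b) := by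
      intro b
      have key : ∀ c : B, h ((π (ρ (-Complex.I) b) - ρ Complex.I (π b)) * c) = 0 := by
        intro c
        obtain ⟨a, rfl⟩ := hsurj c
        have hIcancel : ρ Complex.I (ρ (-Complex.I) b) = b := by
          rw [← hgrp Complex.I (-Complex.I) b]
          simp [hρ0]
        have e1 : h (π (ρ (-Complex.I) b) * π a) = h (ρ Complex.I (π b) * π a) :=
          calc h (π (ρ (-Complex.I) b) * π a) = h (π (a * ρ (-Complex.I) b)) := by rw [hanti]
          _ = h (a * ρ (-Complex.I) b) := hπh _
          _ = h (ρ Complex.I (ρ (-Complex.I) b) * a) := hmod _ _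
          _ = h (b * a) := by rw [hIcancel]
          _ = h (π (b * a)) := (hπh _).symm
          _ = h (π a * π b) := by rw [hanti]
          _ = h (ρ Complex.I (π b) * π a) := hmod _ _
        rw [sub_mul, map_sub, e1, sub_self]
      exact sub_eq_zero.mp (hfaith _ key)
    have nat : ∀ (n : ℕ) (b : B), π (ρ (-((n : ℂ) * Complex.I)) b)
        = ρ ((n : ℂ) * Complex.I) (π b) := by
      intro n
      induction n with
      | zero => intro b; simp [hρ0]
      | succ n ih =>
        intro b
        have hcast : -(((n + 1 : ℕ) : ℂ) * Complex.I)
            = -Complex.I + -((n : ℂ) * Complex.I) := by push_cast; ring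
        have hcast2 : ((n + 1 : ℕ) : ℂ) * Complex.I = Complex.I + (n : ℂ) * Complex.I := by
          push_cast; ring
        rw [hcast, hgrp (-Complex.I) (-((n : ℂ) * Complex.I)) b, base, ih, hcast2,
          hgrp Complex.I ((n : ℂ) * Complex.I) (π b)]
    have main : ∀ (z : ℂ) (b : B), π (ρ (-z) b) = ρ z (π b) := by
      intro z b
      have key : ∀ c : B, h (π (ρ (-z) b) * c) = h (ρ z (π b) * c) := by
        intro c
        obtain ⟨φ, hφc⟩ := hφ c
        have hF : FinExpType (fun w => π (ρ (-w) b)) := by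
          obtain ⟨n, v, g, hg, hrep⟩ := hexp b
          refine ⟨n, fun j => π (v j), fun j w => g j (-w), ?_, ?_⟩
          · intro j
            obtain ⟨hgd, M, r, hM, hr, hbd⟩ := hg j
            refine ⟨hgd.comp differentiable_neg, M, r, hM, hr, ?_⟩
            intro w
            have := hbd (-w)
            simpa [abs_neg] using this
          · intro w
            have h5 : ρ (-w) b = ∑ j, g j (-w) • v j := hrep (-w)
            show π (ρ (-w) b) = _
            rw [h5]
            simp [map_sum, map_smul]
        have hG : FinExpType (fun w => ρ w (π b)) := hexp (π b)
        have hzero : ∀ n : ℕ, φ (π (ρ (-(((n : ℂ) + 1) * Complex.I)) b))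
            = φ (ρ (((n : ℂ) + 1) * Complex.I) (π b)) := by
          intro n
          have hcast : ((n : ℂ) + 1) * Complex.I = ((n + 1 : ℕ) : ℂ) * Complex.I := by
            push_cast; ring
          rw [hcast, nat (n + 1) b]
        have := finexp_scalar_eq hF hG φ hzero z
        rwa [hφc, hφc] at this
      have key' : ∀ c : B, h ((π (ρ (-z) b) - ρ z (π b)) * c) = 0 := by
        intro c
        rw [sub_mul, map_sub, key c, sub_self]
      exact sub_eq_zero.mp (hfaith _ key')
    intro z b
    have := main (-z) b
    rwa [neg_neg] at this
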